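/- Let γ ∈ ℕ, let φ ≥ 0 be a real number, let G be a finite simple locally γ-sparse graph, and let u be a vertex of G. Suppose that for every v ∈ L_1(u) a subset S_v ⊆ N(v) is given with |S_v| ≥ deg(v)/(1+φ). Then the set {u} ∪ L_1(u) ∪ ⋃_{v ∈ L_1(u)} (S_v ∩ L_2(u)) has cardinality at least |B_2(u)| / ((1+φ)(γ+1)). -/

import Mathlib

/-- The set of vertices at graph distance exactly `h` from `u`. -/
def graphSphere {V : Type*} (G : SimpleGraph V) (u : V) (h : ℕ) : Set V :=
  {v | G.Reachable u v ∧ G.dist u v = h}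

/-- The set of vertices at graph distance at most `h` from `u`. -/
def graphBall {V : Type*} (G : SimpleGraph V) (u : V) (h : ℕ) : Set V :=
  {v | G.Reachable u v ∧ G.dist u v ≤ h}

/-- A graph is locally `γ`-sparse if for every vertex `u`:
(i) every `v ∈ L_1(u)` has degree at most `γ` in the subgraph induced by `L_1(u)`, and
(ii) every `w ∈ L_2(u)` has degree at most `γ + 1` in the subgraph induced by `L_1(u) ∪ {w}`. -/
def LocallySparse {V : Type*} (G : SimpleGraph V) (γ : ℕ) : Prop :=
  ∀ u : V,
    (∀ v ∈ graphSphere G u 1, (G.neighborSet v ∩ graphSphere G u 1).ncard ≤ γ) ∧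
    (∀ w ∈ graphSphere G u 2, (G.neighborSet w ∩ graphSphere G u 1).ncard ≤ γ + 1)

/-- In a locally `γ`-sparse graph, if for each `v ∈ L_1(u)` a subset
`S v ⊆ N(v)` with `|S v| ≥ deg(v)/(1+φ)` is given, then the set
`{u} ∪ L_1(u) ∪ ⋃_{v ∈ L_1(u)} (S v ∩ L_2(u))` has cardinality at least
`|B_2(u)| / ((1+φ)(γ+1))`. -/
theorem stmt_4 {V : Type*} [Fintype V] (G : SimpleGraph V) (γ : ℕ) (φ : ℝ) (hφ : 0 ≤ φ)
    (hG : LocallySparse G γ) (u : V) (S : V → Set V)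
    (hS : ∀ v ∈ graphSphere G u 1, S v ⊆ G.neighborSet v)
    (hcard : ∀ v ∈ graphSphere G u 1,
      ((G.neighborSet v).ncard : ℝ) / (1 + φ) ≤ ((S v).ncard : ℝ)) :
    ((graphBall G u 2).ncard : ℝ) / ((1 + φ) * (γ + 1))
      ≤ ((({u} : Set V) ∪ graphSphere G u 1 ∪
            ⋃ v ∈ graphSphere G u 1, (S v ∩ graphSphere G u 2)).ncard : ℝ) := by
  classical
  obtain ⟨hγ1, hγ2⟩ := hG u
  have hφ1 : (0:ℝ) < 1 + φ := by linarith
  set L1 := graphSphere G u 1 with hL1def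
  set L2 := graphSphere G u 2 with hL2def
  have memL1 : ∀ v, v ∈ L1 ↔ G.Adj u v := fun v =>
    ⟨fun h => SimpleGraph.dist_eq_one_iff_adj.mp h.2,
     fun h => ⟨h.reachable, SimpleGraph.dist_eq_one_iff_adj.mpr h⟩⟩
  have uL1 : u ∉ L1 := fun h => G.loopless.irrefl u ((memL1 u).mp h)
  have uL2 : u ∉ L2 := fun h => by
    have := h.2
    rw [SimpleGraph.dist_self] at this
    omega
  have dL12 : Disjoint L1 L2 := by
    rw [Set.disjoint_left]
    rintro x ⟨_, h1⟩ ⟨_, h2⟩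
    omega
  -- neighbors of vertices of L1 lie in {u} ∪ L1 ∪ L2
  have nbr_sub : ∀ v ∈ L1, G.neighborSet v ⊆ ({u} : Set V) ∪ L1 ∪ L2 := by
    intro v hv x hx
    have hadj : G.Adj u v := (memL1 v).mp hv
    have hx' : G.Adj v x := hx
    have hr : G.Reachable u x := hadj.reachable.trans hx'.reachable
    have hd : G.dist u x ≤ 2 := by
      have := SimpleGraph.dist_le (SimpleGraph.Walk.cons hadj hx'.toWalk)
      simpa using this
    have h0 : G.dist u x = 0 ∨ G.dist u x = 1 ∨ G.dist u x = 2 := by omega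
    rcases h0 with h0 | h0 | h0
    · left; left
      have : u = x := hr.dist_eq_zero_iff.mp h0
      simp [← this]
    · left; right; exact ⟨hr, h0⟩
    · right; exact ⟨hr, h0⟩
  -- every vertex of L2 has a neighbor in L1
  have L2nbr : ∀ w ∈ L2, ∃ v ∈ L1, G.Adj v w := by
    intro w hw
    obtain ⟨hr, hd⟩ := hw
    obtain ⟨p, hp⟩ := hr.exists_walk_length_eq_dist
    rw [hd] at hp
    refine ⟨p.getVert 1, ?_, ?_⟩
    · refine (memL1 _).mpr ?_
      have := p.adj_getVert_succ (i := 0) (by omega)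
      simpa using this
    · have h2 : p.getVert 2 = w := by
        rw [← hp]; exact p.getVert_length
      have := p.adj_getVert_succ (i := 1) (by omega)
      rwa [h2] at this
  -- Finset versions
  set F1 : Finset V := (L1.toFinite).toFinset with hF1def
  set F2 : Finset V := (L2.toFinite).toFinset with hF2def
  set T : V → Finset V := fun v => ((S v ∩ L2).toFinite).toFinset with hTdef
  set B : V → Finset V := fun v => ((G.neighborSet v ∩ L2).toFinite).toFinset with hBdef
  set W : Finset V := F1.biUnion T with hWdef
  have memF1 : ∀ v, v ∈ F1 ↔ v ∈ L1 := fun v => Set.Finite.mem_toFinset _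
  have memT : ∀ v x, x ∈ T v ↔ x ∈ S v ∩ L2 := fun v x => Set.Finite.mem_toFinset _
  -- double counting: ∑ |T v| ≤ (γ+1) * |W|
  have key1 : ∑ v ∈ F1, (T v).card ≤ (γ + 1) * W.card := by
    have step1 : ∀ v ∈ F1, (T v).card = ∑ w ∈ W, if w ∈ T v then 1 else 0 := by
      intro v hv
      have hfe : W.filter (fun w => w ∈ T v) = T v := by
        apply Finset.ext
        intro w
        rw [Finset.mem_filter, and_iff_right_iff_imp]
        intro h
        exact Finset.mem_biUnion.mpr ⟨v, hv, h⟩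
      rw [← Finset.card_filter, hfe]
    rw [Finset.sum_congr rfl step1, Finset.sum_comm]
    have step2 : ∀ w ∈ W, (∑ v ∈ F1, if w ∈ T v then 1 else 0) ≤ γ + 1 := by
      intro w hw
      rw [← Finset.card_filter]
      obtain ⟨v0, hv0, hwv0⟩ := Finset.mem_biUnion.mp hw
      have hwL2 : w ∈ L2 := ((memT v0 w).mp hwv0).2
      have hsub : F1.filter (fun v => w ∈ T v) ⊆
          ((G.neighborSet w ∩ L1).toFinite).toFinset := by
        intro v hv
        obtain ⟨hvF1, hvT⟩ := Finset.mem_filter.mp hv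
        rw [Set.Finite.mem_toFinset]
        have hwS : w ∈ S v := ((memT v w).mp hvT).1
        have : G.Adj v w := hS v ((memF1 v).mp hvF1) hwS
        exact ⟨this.symm, (memF1 v).mp hvF1⟩
      calc (F1.filter (fun v => w ∈ T v)).card
          ≤ ((G.neighborSet w ∩ L1).toFinite).toFinset.card := Finset.card_le_card hsub
        _ = (G.neighborSet w ∩ L1).ncard := (Set.ncard_eq_toFinset_card _ _).symm
        _ ≤ γ + 1 := hγ2 w hwL2
    calc ∑ w ∈ W, ∑ v ∈ F1, (if w ∈ T v then 1 else 0)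
        ≤ ∑ _w ∈ W, (γ + 1) := Finset.sum_le_sum step2
      _ = (γ + 1) * W.card := by rw [Finset.sum_const, smul_eq_mul, mul_comm]
  -- |L2| ≤ ∑ |B v|
  have key2 : F2.card ≤ ∑ v ∈ F1, (B v).card := by
    have hsub : F2 ⊆ F1.biUnion B := by
      intro w hw
      have hwL2 : w ∈ L2 := Set.Finite.mem_toFinset _ |>.mp hw
      obtain ⟨v, hv, hadj⟩ := L2nbr w hwL2
      refine Finset.mem_biUnion.mpr ⟨v, (memF1 v).mpr hv, ?_⟩
      rw [Set.Finite.mem_toFinset]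
      exact ⟨hadj, hwL2⟩
    exact (Finset.card_le_card hsub).trans Finset.card_biUnion_le
  -- per-vertex inequality
  have keyv : ∀ v ∈ F1, (1 + (B v).card : ℝ) ≤ (1 + φ) * ((T v).card + (1 + γ)) := by
    intro v hvF
    have hv : v ∈ L1 := (memF1 v).mp hvF
    have hadj : G.Adj u v := (memL1 v).mp hv
    -- (a) 1 + |B v| ≤ deg v
    have ha : 1 + (B v).card ≤ (G.neighborSet v).ncard := by
      have hins : insert u (G.neighborSet v ∩ L2) ⊆ G.neighborSet v := by
        intro x hx
        rcases Set.mem_insert_iff.mp hx with h | h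
        · subst h; exact hadj.symm
        · exact h.1
      have hnotmem : u ∉ G.neighborSet v ∩ L2 := fun h => uL2 h.2
      have hBcard : (B v).card = (G.neighborSet v ∩ L2).ncard :=
        (Set.ncard_eq_toFinset_card _ _).symm
      calc 1 + (B v).card = (G.neighborSet v ∩ L2).ncard + 1 := by omega
        _ = (insert u (G.neighborSet v ∩ L2)).ncard := (Set.ncard_insert_of_notMem hnotmem (Set.toFinite _)).symm
        _ ≤ (G.neighborSet v).ncard := Set.ncard_le_ncard hins (Set.toFinite _)
    -- (c) |S v| ≤ |T v| + 1 + γ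
    have hc : ((S v).ncard : ℝ) ≤ (T v).card + (1 + γ) := by
      have hsub : S v ⊆ (S v ∩ L2) ∪ (insert u (G.neighborSet v ∩ L1)) := by
        intro x hx
        have hxN : x ∈ G.neighborSet v := hS v hv hx
        rcases nbr_sub v hv hxN with h | h
        · rcases h with h | h
          · right; exact Set.mem_insert_iff.mpr (Or.inl h)
          · right; exact Set.mem_insert_iff.mpr (Or.inr ⟨hxN, h⟩)
        · left; exact ⟨hx, h⟩
      have h1 : (S v).ncard ≤ (S v ∩ L2).ncard + (insert u (G.neighborSet v ∩ L1)).ncard :=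
        (Set.ncard_le_ncard hsub (Set.toFinite _)).trans (Set.ncard_union_le _ _)
      have h2' : (insert u (G.neighborSet v ∩ L1)).ncard ≤ γ + 1 := by
        refine (Set.ncard_insert_le _ _).trans ?_
        have := hγ1 v hv
        omega
      have hTcard : (S v ∩ L2).ncard = (T v).card := Set.ncard_eq_toFinset_card _ _
      have : (S v).ncard ≤ (T v).card + (γ + 1) := by omega
      push_cast
      calc ((S v).ncard : ℝ) ≤ ((T v).card + (γ + 1) : ℕ) := by exact_mod_cast this
        _ = (T v).card + (1 + γ) := by push_cast; ring
    have hb := hcard v hv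
    rw [div_le_iff₀ hφ1] at hb
    have ha' : (1 + (B v).card : ℝ) ≤ ((G.neighborSet v).ncard : ℝ) := by exact_mod_cast ha
    calc (1 + (B v).card : ℝ) ≤ ((G.neighborSet v).ncard : ℝ) := ha'
      _ ≤ (S v).ncard * (1 + φ) := hb
      _ ≤ ((T v).card + (1 + γ)) * (1 + φ) := by nlinarith [hc]
      _ = (1 + φ) * ((T v).card + (1 + γ)) := by ring
  -- sum the per-vertex inequality
  have keysum : (F1.card : ℝ) + F2.card ≤ (1 + φ) * (γ + 1) * (W.card + F1.card) := by
    have hsum : ∑ v ∈ F1, (1 + (B v).card : ℝ) ≤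
        ∑ v ∈ F1, (1 + φ) * ((T v).card + (1 + γ)) := Finset.sum_le_sum keyv
    have hL : (F1.card : ℝ) + ∑ v ∈ F1, ((B v).card : ℝ) = ∑ v ∈ F1, (1 + (B v).card : ℝ) := by
      rw [Finset.sum_add_distrib, Finset.sum_const, nsmul_eq_mul, mul_one]
    have hR : ∑ v ∈ F1, (1 + φ) * ((T v).card + (1 + γ) : ℝ)
        = (1 + φ) * ((∑ v ∈ F1, ((T v).card : ℝ)) + F1.card * (1 + γ)) := by
      rw [← Finset.mul_sum, Finset.sum_add_distrib, Finset.sum_const, nsmul_eq_mul]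
    have h2 : (F2.card : ℝ) ≤ ∑ v ∈ F1, ((B v).card : ℝ) := by
      exact_mod_cast Nat.cast_le.mpr key2 |>.trans_eq (by push_cast; rfl)
    have h1 : (∑ v ∈ F1, ((T v).card : ℝ)) ≤ (γ + 1) * W.card := by
      have := key1
      calc (∑ v ∈ F1, ((T v).card : ℝ)) = ((∑ v ∈ F1, (T v).card : ℕ) : ℝ) := by push_cast; rfl
        _ ≤ (((γ + 1) * W.card : ℕ) : ℝ) := by exact_mod_cast this
        _ = (γ + 1) * W.card := by push_cast; ring
    have := hL ▸ hsum
    rw [hR] at this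
    nlinarith [this, h1, h2, hφ1]
  -- identify the target set
  have hUnion : (⋃ v ∈ L1, (S v ∩ L2)) = (W : Set V) := by
    ext x
    constructor
    · intro hx
      obtain ⟨v, hv, hxv⟩ := Set.mem_iUnion₂.mp hx
      exact Finset.mem_coe.mpr (Finset.mem_biUnion.mpr ⟨v, (memF1 v).mpr hv, (memT v x).mpr hxv⟩)
    · intro hx
      obtain ⟨v, hv, hxv⟩ := Finset.mem_biUnion.mp (Finset.mem_coe.mp hx)
      exact Set.mem_iUnion₂.mpr ⟨v, (memF1 v).mp hv, (memT v x).mp hxv⟩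
  have hA : (({u} : Set V) ∪ L1 ∪ ⋃ v ∈ L1, (S v ∩ L2)).ncard = 1 + F1.card + W.card := by
    rw [hUnion]
    have hdisj : Disjoint (({u} : Set V) ∪ L1) (W : Set V) := by
      rw [Set.disjoint_left]
      intro x hx hxW
      obtain ⟨v, hv, hxT⟩ := Finset.mem_biUnion.mp hxW
      have hxL2 : x ∈ L2 := ((memT v x).mp hxT).2
      rcases hx with h | h
      · exact uL2 (Set.mem_singleton_iff.mp h ▸ hxL2)
      · exact Set.disjoint_left.mp dL12 h hxL2
    rw [Set.ncard_union_eq hdisj (Set.toFinite _) (Set.toFinite _)]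
    rw [Set.singleton_union, Set.ncard_insert_of_notMem uL1 (Set.toFinite _)]
    rw [Set.ncard_coe_finset]
    rw [Set.ncard_eq_toFinset_card _ (L1.toFinite), ← hF1def]
    omega
  -- bound the ball
  have hB2 : (graphBall G u 2).ncard ≤ 1 + F1.card + F2.card := by
    have hsub : graphBall G u 2 ⊆ insert u (L1 ∪ L2) := by
      rintro x ⟨hr, hd⟩
      have h0 : G.dist u x = 0 ∨ G.dist u x = 1 ∨ G.dist u x = 2 := by omega
      rcases h0 with h0 | h0 | h0
      · exact Set.mem_insert_iff.mpr (Or.inl (hr.dist_eq_zero_iff.mp h0).symm)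
      · exact Set.mem_insert_iff.mpr (Or.inr (Or.inl ⟨hr, h0⟩))
      · exact Set.mem_insert_iff.mpr (Or.inr (Or.inr ⟨hr, h0⟩))
    calc (graphBall G u 2).ncard ≤ (insert u (L1 ∪ L2)).ncard :=
          Set.ncard_le_ncard hsub (Set.toFinite _)
      _ ≤ (L1 ∪ L2).ncard + 1 := Set.ncard_insert_le _ _
      _ ≤ L1.ncard + L2.ncard + 1 := by
          have := Set.ncard_union_le L1 L2
          omega
      _ = 1 + F1.card + F2.card := by
          rw [Set.ncard_eq_toFinset_card _ (L1.toFinite), Set.ncard_eq_toFinset_card _ (L2.toFinite),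
            ← hF1def, ← hF2def]
          omega
  -- finish
  rw [div_le_iff₀ (by positivity)]
  rw [hA]
  have hB2' : ((graphBall G u 2).ncard : ℝ) ≤ 1 + F1.card + F2.card := by exact_mod_cast hB2
  have hone : (1:ℝ) ≤ (1 + φ) * (γ + 1) := by nlinarith [hφ, (Nat.cast_nonneg γ : (0:ℝ) ≤ γ)]
  push_cast
  nlinarith [keysum, hB2', hone]
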